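/- Fresh renaming preserves observational equivalence: for a fresh substitution σ = [n⃗:=m⃗] (with the m⃗ fresh and distinct), M ≈_P N if and only if Mσ ≈_{Pσ} Nσ. -/

import Mathlib

/-- Terms of continuation calculus: names (coded as naturals) and dot. -/
inductive Tm where
  | name : ℕ → Tm
  | dot : Tm → Tm → Tm
deriving DecidableEq

/-- Right-hand sides of rules: names, variables (de Bruijn-style indices
into the left-hand side's variable list), and dot. -/
inductive Rhs where
  | name : ℕ → Rhs
  | var : ℕ → Rhs
  | dot : Rhs → Rhs → Rhs
deriving DecidableEq

/-- A rule `n.x₁.⋯.xₖ → r`: head name, arity `k`, and right-hand side. -/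
structure Rule where
  head : ℕ
  arity : ℕ
  rhs : Rhs
deriving DecidableEq

/-- A program is a finite set of rules. -/
abbrev Program := Finset Rule

/-- Variables occurring in a right-hand side. -/
def Rhs.HasVar : Rhs → ℕ → Prop
  | .name _, _ => False
  | .var w, v => w = v
  | .dot a b, v => a.HasVar v ∨ b.HasVar v

/-- Well-formedness: every variable of a right-hand side occurs in the
left-hand side, and there is at most one rule per head name. -/
def Program.Wf (P : Program) : Prop :=
  (∀ r ∈ P, ∀ v, r.rhs.HasVar v → v < r.arity) ∧
  (∀ r₁ ∈ P, ∀ r₂ ∈ P, r₁.head = r₂.head → r₁ = r₂)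

/-- `n.t₁.⋯.tₖ` : left-associated application of a term to a list of terms. -/
def Tm.apps : Tm → List Tm → Tm
  | h, [] => h
  | h, t :: ts => Tm.apps (h.dot t) ts

/-- Instantiation of a right-hand side with the terms matched by the
left-hand side variables; fails if some variable is out of range. -/
def Rhs.inst (ts : List Tm) : Rhs → Option Tm
  | .name n => some (.name n)
  | .var v => ts[v]?
  | .dot a b => do pure (.dot (← a.inst ts) (← b.inst ts))

/-- One-step evaluation `M →_P N`. -/
def Step (P : Program) (M N : Tm) : Prop :=
  ∃ r ∈ P, ∃ ts : List Tm, ts.length = r.arity ∧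
    M = Tm.apps (.name r.head) ts ∧ r.rhs.inst ts = some N

/-- Multi-step evaluation `M →*_P N`. -/
def Steps (P : Program) : Tm → Tm → Prop := Relation.ReflTransGen (Step P)

/-- `M` is final: it has no successor. -/
def Final (P : Program) (M : Tm) : Prop := ¬ ∃ N, Step P M N

/-- `M` terminates: it evaluates to a final term. -/
def Terminates (P : Program) (M : Tm) : Prop := ∃ N, Steps P M N ∧ Final P N

/-- The name `m` occurs in a term. -/
def Tm.HasName (m : ℕ) : Tm → Prop
  | .name n => n = m
  | .dot a b => a.HasName m ∨ b.HasName m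

/-- The name `m` occurs in a right-hand side. -/
def Rhs.HasName (m : ℕ) : Rhs → Prop
  | .name n => n = m
  | .var _ => False
  | .dot a b => a.HasName m ∨ b.HasName m

/-- The name `m` occurs (is mentioned) in a program. -/
def Program.HasName (P : Program) (m : ℕ) : Prop :=
  ∃ r ∈ P, r.head = m ∨ r.rhs.HasName m

/-- The name `m` is defined by the program (is the head of some rule). -/
def Program.Defines (P : Program) (m : ℕ) : Prop :=
  ∃ r ∈ P, r.head = m

/-- Substitution of a term for a name, `M[fr := t]`. -/
def Tm.subName (m : ℕ) (t : Tm) : Tm → Tm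
  | .name n => if n = m then t else .name n
  | .dot a b => .dot (Tm.subName m t a) (Tm.subName m t b)

/-- Common reduct relation `M =_P N`. -/
def CommonRed (P : Program) (M N : Tm) : Prop :=
  ∃ t, Steps P M t ∧ Steps P N t

/-- Observational equivalence `M ≈_P N`. -/
def ObsEq (P : Program) (M N : Tm) : Prop :=
  ∀ P' : Program, P'.Wf → P ⊆ P' →
    ∀ X : Tm, (Terminates P' (X.dot M) ↔ Terminates P' (X.dot N))

/-- Renaming of names in a term. -/
def Tm.rename (f : ℕ → ℕ) : Tm → Tm
  | .name n => .name (f n)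
  | .dot a b => .dot (a.rename f) (b.rename f)

/-- Renaming of names in a right-hand side. -/
def Rhs.rename (f : ℕ → ℕ) : Rhs → Rhs
  | .name n => .name (f n)
  | .var v => .var v
  | .dot a b => .dot (a.rename f) (b.rename f)

/-- Renaming of names in a rule. -/
def Rule.rename (f : ℕ → ℕ) (r : Rule) : Rule :=
  ⟨f r.head, r.arity, r.rhs.rename f⟩

/-- Renaming of names in a program. -/
def Program.rename (f : ℕ → ℕ) (P : Program) : Program :=
  P.image (Rule.rename f)

/-- The fresh substitution `[n⃗ := m⃗]` as a function on names. -/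
def renFun (ns ms : List ℕ) (n : ℕ) : ℕ :=
  ((ns.zip ms).lookup n).getD n

/-- `M` has arity `k` under `P`: `M = n.q₁.⋯.qᵢ` where `n` has a rule of
arity `i + k`. -/
def Tm.ArityIs (P : Program) (M : Tm) (k : ℕ) : Prop :=
  ∃ r ∈ P, ∃ ts : List Tm, M = Tm.apps (.name r.head) ts ∧ ts.length + k = r.arity

/-! ### Name sets -/

def Tm.names : Tm → Finset ℕ
  | .name n => {n}
  | .dot a b => a.names ∪ b.names

def Rhs.names : Rhs → Finset ℕ
  | .name n => {n}
  | .var _ => ∅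
  | .dot a b => a.names ∪ b.names

def Rule.names (r : Rule) : Finset ℕ := insert r.head r.rhs.names

def Program.names (P : Program) : Finset ℕ := P.sup Rule.names

lemma Tm.mem_names_iff {m : ℕ} {M : Tm} : m ∈ M.names ↔ M.HasName m := by
  induction M with
  | name n => simp [Tm.names, Tm.HasName, eq_comm]
  | dot a b iha ihb => simp [Tm.names, Tm.HasName, iha, ihb]

lemma Rhs.mem_names_iff {m : ℕ} {r : Rhs} : m ∈ r.names ↔ r.HasName m := by
  induction r with
  | name n => simp [Rhs.names, Rhs.HasName, eq_comm]
  | var v => simp [Rhs.names, Rhs.HasName]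
  | dot a b iha ihb => simp [Rhs.names, Rhs.HasName, iha, ihb]

lemma Program.mem_names_iff {m : ℕ} {P : Program} : m ∈ P.names ↔ P.HasName m := by
  simp only [Program.names, Finset.mem_sup, Program.HasName, Rule.names,
    Finset.mem_insert, Rhs.mem_names_iff]
  constructor
  · rintro ⟨r, hr, h | h⟩
    · exact ⟨r, hr, Or.inl h.symm⟩
    · exact ⟨r, hr, Or.inr h⟩
  · rintro ⟨r, hr, h | h⟩
    · exact ⟨r, hr, Or.inl h.symm⟩
    · exact ⟨r, hr, Or.inr h⟩

lemma Rule.names_subset {P : Program} {r : Rule} (h : r ∈ P) : r.names ⊆ P.names :=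
  fun x hx => Finset.mem_sup.2 ⟨r, h, hx⟩

lemma Rule.head_mem_names (r : Rule) : r.head ∈ r.names := Finset.mem_insert_self _ _

lemma Rule.rhs_names_subset (r : Rule) : r.rhs.names ⊆ r.names :=
  Finset.subset_insert _ _

/-! ### head name and arguments -/

def Tm.headName : Tm → ℕ
  | .name n => n
  | .dot a _ => a.headName

def Tm.args : Tm → List Tm
  | .name _ => []
  | .dot a b => a.args ++ [b]

lemma Tm.apps_append (h : Tm) (ts us : List Tm) :
    Tm.apps h (ts ++ us) = Tm.apps (Tm.apps h ts) us := by
  induction ts generalizing h with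
  | nil => rfl
  | cons t ts ih => simp [Tm.apps, ih]

lemma Tm.headName_apps (h : Tm) (ts : List Tm) : (Tm.apps h ts).headName = h.headName := by
  induction ts generalizing h with
  | nil => rfl
  | cons t ts ih => simpa [Tm.apps, Tm.headName] using ih (h.dot t)

lemma Tm.args_apps (h : Tm) (ts : List Tm) : (Tm.apps h ts).args = h.args ++ ts := by
  induction ts generalizing h with
  | nil => simp [Tm.apps]
  | cons t ts ih => simp [Tm.apps, ih (h.dot t), Tm.args]

lemma Tm.apps_headName_args (M : Tm) : Tm.apps (.name M.headName) M.args = M := by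
  induction M with
  | name n => rfl
  | dot a b iha ihb =>
    show Tm.apps (.name a.headName) (a.args ++ [b]) = a.dot b
    rw [Tm.apps_append, iha]; rfl

lemma Tm.headName_mem_names (M : Tm) : M.headName ∈ M.names := by
  induction M with
  | name n => simp [Tm.names, Tm.headName]
  | dot a b iha ihb => simp only [Tm.names, Tm.headName, Finset.mem_union]; exact Or.inl iha

lemma Tm.names_head_subset (h : Tm) (ts : List Tm) : h.names ⊆ (Tm.apps h ts).names := by
  induction ts generalizing h with
  | nil => exact subset_rfl
  | cons t ts ih =>
    refine subset_trans ?_ (ih (h.dot t))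
    simp [Tm.names]

lemma Tm.names_arg_subset {t : Tm} {ts : List Tm} (ht : t ∈ ts) (h : Tm) :
    t.names ⊆ (Tm.apps h ts).names := by
  induction ts generalizing h with
  | nil => cases ht
  | cons u ts ih =>
    rcases List.mem_cons.1 ht with rfl | ht
    · refine subset_trans ?_ (Tm.names_head_subset (h.dot t) ts)
      simp [Tm.names]
    · exact ih ht (h.dot u)
/-! ### Renaming lemmas -/

lemma Tm.headName_rename (f : ℕ → ℕ) (M : Tm) : (M.rename f).headName = f M.headName := by
  induction M with
  | name n => rfl
  | dot a b iha ihb => exact iha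

lemma Tm.args_rename (f : ℕ → ℕ) (M : Tm) : (M.rename f).args = M.args.map (Tm.rename f) := by
  induction M with
  | name n => rfl
  | dot a b iha ihb => simp [Tm.rename, Tm.args, iha]

lemma Tm.names_rename (f : ℕ → ℕ) (M : Tm) : (M.rename f).names = M.names.image f := by
  induction M with
  | name n => simp [Tm.rename, Tm.names]
  | dot a b iha ihb => simp [Tm.rename, Tm.names, iha, ihb, Finset.image_union]

lemma Tm.rename_rename (f g : ℕ → ℕ) (M : Tm) :
    (M.rename g).rename f = M.rename (f ∘ g) := by
  induction M with
  | name n => rfl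
  | dot a b iha ihb => simp [Tm.rename, iha, ihb]

lemma Tm.rename_id {f : ℕ → ℕ} {M : Tm} (h : ∀ x ∈ M.names, f x = x) : M.rename f = M := by
  induction M with
  | name n => simp [Tm.rename, h n (by simp [Tm.names])]
  | dot a b iha ihb =>
    simp only [Tm.names, Finset.mem_union] at h
    simp [Tm.rename, iha (fun x hx => h x (Or.inl hx)), ihb (fun x hx => h x (Or.inr hx))]

lemma Tm.apps_rename (f : ℕ → ℕ) (h : Tm) (ts : List Tm) :
    (Tm.apps h ts).rename f = Tm.apps (h.rename f) (ts.map (Tm.rename f)) := by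
  induction ts generalizing h with
  | nil => rfl
  | cons t ts ih => simp [Tm.apps, ih (h.dot t), Tm.rename]

lemma Rhs.hasVar_rename {f : ℕ → ℕ} {r : Rhs} {v : ℕ} :
    (r.rename f).HasVar v ↔ r.HasVar v := by
  induction r with
  | name n => simp [Rhs.rename, Rhs.HasVar]
  | var w => simp [Rhs.rename, Rhs.HasVar]
  | dot a b iha ihb => simp [Rhs.rename, Rhs.HasVar, iha, ihb]

lemma Rhs.rename_rename (f g : ℕ → ℕ) (r : Rhs) :
    (r.rename g).rename f = r.rename (f ∘ g) := by
  induction r with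
  | name n => rfl
  | var v => rfl
  | dot a b iha ihb => simp [Rhs.rename, iha, ihb]

lemma Rhs.rename_id {f : ℕ → ℕ} {r : Rhs} (h : ∀ x ∈ r.names, f x = x) : r.rename f = r := by
  induction r with
  | name n => simp [Rhs.rename, h n (by simp [Rhs.names])]
  | var v => rfl
  | dot a b iha ihb =>
    simp only [Rhs.names, Finset.mem_union] at h
    simp [Rhs.rename, iha (fun x hx => h x (Or.inl hx)), ihb (fun x hx => h x (Or.inr hx))]

lemma Rule.names_rename (f : ℕ → ℕ) (r : Rule) :
    (Rule.rename f r).names = r.names.image f := by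
  have : (r.rhs.rename f).names = r.rhs.names.image f := by
    induction r.rhs with
    | name n => simp [Rhs.rename, Rhs.names]
    | var v => simp [Rhs.rename, Rhs.names]
    | dot a b iha ihb => simp [Rhs.rename, Rhs.names, iha, ihb, Finset.image_union]
  simp [Rule.names, Rule.rename, this, Finset.image_insert]

lemma Rule.rename_rename (f g : ℕ → ℕ) (r : Rule) :
    Rule.rename f (Rule.rename g r) = Rule.rename (f ∘ g) r := by
  simp [Rule.rename, Rhs.rename_rename]

lemma Rule.rename_id {f : ℕ → ℕ} {r : Rule} (h : ∀ x ∈ r.names, f x = x) :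
    Rule.rename f r = r := by
  have h1 : f r.head = r.head := h _ r.head_mem_names
  have h2 : r.rhs.rename f = r.rhs := Rhs.rename_id (fun x hx => h x (r.rhs_names_subset hx))
  simp [Rule.rename, h1, h2]

lemma Program.names_rename_subset (f : ℕ → ℕ) (P : Program) :
    (P.rename f).names ⊆ P.names.image f := by
  intro x hx
  obtain ⟨r', hr', hx⟩ := Finset.mem_sup.1 hx
  obtain ⟨r, hr, rfl⟩ := Finset.mem_image.1 hr'
  rw [Rule.names_rename] at hx
  obtain ⟨y, hy, rfl⟩ := Finset.mem_image.1 hx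
  exact Finset.mem_image.2 ⟨y, Rule.names_subset hr hy, rfl⟩

lemma Program.rename_rename (f g : ℕ → ℕ) (P : Program) :
    (P.rename g).rename f = P.rename (f ∘ g) := by
  simp [Program.rename, Finset.image_image, Function.comp_def, Rule.rename_rename]

lemma Program.rename_id {f : ℕ → ℕ} {P : Program} (h : ∀ x ∈ P.names, f x = x) :
    P.rename f = P := by
  rw [Program.rename]
  refine Finset.image_congr ?_ |>.trans (Finset.image_id)
  intro r hr
  exact Rule.rename_id (fun x hx => h x (Rule.names_subset hr hx))

lemma Program.rename_mono {P Q : Program} (f : ℕ → ℕ) (h : P ⊆ Q) :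
    P.rename f ⊆ Q.rename f := Finset.image_subset_image h

/-! ### Instantiation and renaming -/

lemma Rhs.inst_rename (f : ℕ → ℕ) (ts : List Tm) (r : Rhs) :
    (r.rename f).inst (ts.map (Tm.rename f)) = (r.inst ts).map (Tm.rename f) := by
  induction r with
  | name n => rfl
  | var v => simp [Rhs.rename, Rhs.inst, List.getElem?_map]
  | dot a b iha ihb =>
    simp only [Rhs.rename, Rhs.inst, iha, ihb]
    cases a.inst ts <;> cases b.inst ts <;> simp [Option.bind, Tm.rename]

lemma Rhs.inst_names {r : Rhs} {ts : List Tm} {N : Tm} (h : r.inst ts = some N) :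
    ∀ x ∈ N.names, x ∈ r.names ∨ ∃ t ∈ ts, x ∈ t.names := by
  induction r generalizing N with
  | name n =>
    simp only [Rhs.inst, Option.some.injEq] at h
    subst h; intro x hx; exact Or.inl (by simpa [Tm.names, Rhs.names] using hx)
  | var v =>
    simp only [Rhs.inst] at h
    intro x hx
    exact Or.inr ⟨N, List.mem_of_getElem? h, hx⟩
  | dot a b iha ihb =>
    simp only [Rhs.inst] at h
    cases ha : a.inst ts with
    | none => rw [ha] at h; simp at h
    | some A =>
      cases hb : b.inst ts with
      | none => rw [ha, hb] at h; simp at h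
      | some B =>
        rw [ha, hb] at h
        simp only [Option.bind_eq_bind, Option.bind_some, Option.some.injEq, pure] at h
        cases h
        intro x hx
        simp only [Tm.names, Finset.mem_union] at hx
        simp only [Rhs.names, Finset.mem_union]
        rcases hx with hx | hx
        · rcases iha ha x hx with h | h
          · exact Or.inl (Or.inl h)
          · exact Or.inr h
        · rcases ihb hb x hx with h | h
          · exact Or.inl (Or.inr h)
          · exact Or.inr h
/-! ### Step transfer under renaming -/

lemma step_rename {P : Program} {M N : Tm} {f : ℕ → ℕ} (h : Step P M N) :
    Step (P.rename f) (M.rename f) (N.rename f) := by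
  obtain ⟨r, hr, ts, hlen, hM, hinst⟩ := h
  refine ⟨Rule.rename f r, Finset.mem_image_of_mem _ hr, ts.map (Tm.rename f),
    by simp [Rule.rename, hlen], ?_, ?_⟩
  · rw [hM, Tm.apps_rename]; rfl
  · show (r.rhs.rename f).inst (ts.map (Tm.rename f)) = some (N.rename f)
    rw [Rhs.inst_rename, hinst]; rfl

lemma steps_rename {P : Program} {M N : Tm} {f : ℕ → ℕ} (h : Steps P M N) :
    Steps (P.rename f) (M.rename f) (N.rename f) := by
  induction h with
  | refl => exact Relation.ReflTransGen.refl
  | tail _ h ih => exact ih.tail (step_rename h)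

lemma step_names {P : Program} {M N : Tm} (h : Step P M N) :
    ∀ x ∈ N.names, x ∈ P.names ∨ x ∈ M.names := by
  obtain ⟨r, hr, ts, hlen, hM, hinst⟩ := h
  intro x hx
  rcases Rhs.inst_names hinst x hx with h | ⟨t, ht, hxt⟩
  · exact Or.inl (Rule.names_subset hr (r.rhs_names_subset h))
  · exact Or.inr (hM ▸ Tm.names_arg_subset ht _ hxt)

lemma step_rename_rev {P : Program} {M T : Tm} {f : ℕ → ℕ} {A : Finset ℕ}
    (hinj : ∀ x ∈ A, ∀ y ∈ A, f x = f y → x = y)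
    (hPA : P.names ⊆ A) (hMA : M.names ⊆ A)
    (h : Step (P.rename f) (M.rename f) T) :
    ∃ N, Step P M N ∧ T = N.rename f := by
  obtain ⟨r', hr', ts', hlen, hM, hinst⟩ := h
  obtain ⟨r, hr, rfl⟩ := Finset.mem_image.1 hr'
  have hhead : M.headName = r.head := by
    have h1 : (M.rename f).headName = f M.headName := Tm.headName_rename f M
    have h2 : (Tm.apps (.name (Rule.rename f r).head) ts').headName = f r.head := by
      rw [Tm.headName_apps]; rfl
    exact hinj _ (hMA M.headName_mem_names) _ (hPA (Rule.names_subset hr r.head_mem_names))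
      (by rw [← h1, hM, h2])
  have hargs : ts' = M.args.map (Tm.rename f) := by
    have h3 := congrArg Tm.args hM
    rw [Tm.args_rename, Tm.args_apps] at h3
    simpa [Tm.args] using h3.symm
  have hlen' : M.args.length = r.arity := by
    have : ts'.length = (Rule.rename f r).arity := hlen
    simp [hargs, Rule.rename] at this ⊢
    exact this
  have hinst2 : (r.rhs.rename f).inst (M.args.map (Tm.rename f)) = some T := by
    rw [← hargs]; exact hinst
  rw [Rhs.inst_rename] at hinst2
  obtain ⟨N, hN, rfl⟩ := Option.map_eq_some_iff.1 hinst2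
  refine ⟨N, ⟨r, hr, M.args, hlen', ?_, hN⟩, rfl⟩
  conv_lhs => rw [← Tm.apps_headName_args M]
  rw [hhead]

lemma final_rename_iff {P : Program} {M : Tm} {f : ℕ → ℕ} {A : Finset ℕ}
    (hinj : ∀ x ∈ A, ∀ y ∈ A, f x = f y → x = y)
    (hPA : P.names ⊆ A) (hMA : M.names ⊆ A) :
    Final P M ↔ Final (P.rename f) (M.rename f) := by
  constructor
  · rintro hf ⟨T, hT⟩
    obtain ⟨N, hN, _⟩ := step_rename_rev hinj hPA hMA hT
    exact hf ⟨N, hN⟩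
  · rintro hf ⟨N, hN⟩
    exact hf ⟨_, step_rename hN⟩

lemma steps_names {P : Program} {M N : Tm} {A : Finset ℕ}
    (hPA : P.names ⊆ A) (hMA : M.names ⊆ A) (h : Steps P M N) : N.names ⊆ A := by
  induction h with
  | refl => exact hMA
  | tail _ h ih =>
    intro x hx
    rcases step_names h x hx with h' | h'
    · exact hPA h'
    · exact ih h'

lemma terminates_rename_aux {P : Program} {f : ℕ → ℕ} {A : Finset ℕ}
    (hinj : ∀ x ∈ A, ∀ y ∈ A, f x = f y → x = y) (hPA : P.names ⊆ A)
    {V U : Tm} (hsteps : Steps (P.rename f) V U) (hfin : Final (P.rename f) U) :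
    ∀ M : Tm, V = M.rename f → M.names ⊆ A → Terminates P M := by
  induction hsteps using Relation.ReflTransGen.head_induction_on with
  | refl =>
    rintro M rfl hMA
    exact ⟨M, Relation.ReflTransGen.refl, (final_rename_iff hinj hPA hMA).2 hfin⟩
  | head h' hrest ih =>
    rintro M rfl hMA
    obtain ⟨N, hMN, rfl⟩ := step_rename_rev hinj hPA hMA h'
    obtain ⟨T, hT, hTf⟩ := ih N rfl
      (fun x hx => (step_names hMN x hx).elim (fun h => hPA h) (fun h => hMA h))
    exact ⟨T, Relation.ReflTransGen.head hMN hT, hTf⟩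

lemma terminates_rename_iff {P : Program} {M : Tm} {f : ℕ → ℕ} {A : Finset ℕ}
    (hinj : ∀ x ∈ A, ∀ y ∈ A, f x = f y → x = y)
    (hPA : P.names ⊆ A) (hMA : M.names ⊆ A) :
    Terminates P M ↔ Terminates (P.rename f) (M.rename f) := by
  constructor
  · rintro ⟨T, hT, hTf⟩
    exact ⟨T.rename f, steps_rename hT,
      (final_rename_iff hinj hPA (steps_names hPA hMA hT)).1 hTf⟩
  · rintro ⟨U, hU, hUf⟩
    exact terminates_rename_aux hinj hPA hU hUf M rfl hMA

/-! ### Well-formedness transfer -/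

lemma wf_rename {P : Program} {f : ℕ → ℕ}
    (hinj : ∀ x ∈ P.names, ∀ y ∈ P.names, f x = f y → x = y) (hP : P.Wf) :
    (P.rename f).Wf := by
  obtain ⟨h1, h2⟩ := hP
  constructor
  · rintro r' hr' v hv
    obtain ⟨r, hr, rfl⟩ := Finset.mem_image.1 hr'
    exact h1 r hr v (Rhs.hasVar_rename.1 hv)
  · rintro r₁' hr₁' r₂' hr₂' hh
    obtain ⟨r₁, hr₁, rfl⟩ := Finset.mem_image.1 hr₁'
    obtain ⟨r₂, hr₂, rfl⟩ := Finset.mem_image.1 hr₂'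
    have : r₁.head = r₂.head :=
      hinj _ (Rule.names_subset hr₁ r₁.head_mem_names) _
        (Rule.names_subset hr₂ r₂.head_mem_names) hh
    rw [h2 r₁ hr₁ r₂ hr₂ this]
/-! ### renFun lemmas -/

lemma lookup_cons_ne {n a b : ℕ} {l : List (ℕ × ℕ)} (h : n ≠ a) :
    ((a, b) :: l).lookup n = l.lookup n := by
  rw [List.lookup_cons]
  simp [beq_eq_false_iff_ne.2 h]

lemma lookup_zip_eq_none {ns ms : List ℕ} {n : ℕ} (h : n ∉ ns) :
    (ns.zip ms).lookup n = none := by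
  rw [List.lookup_eq_none_iff]
  rintro ⟨a, b⟩ hm
  simp only [bne_iff_ne, ne_eq]
  rintro rfl
  exact h (List.of_mem_zip hm).1

lemma renFun_not_mem {ns ms : List ℕ} {n : ℕ} (h : n ∉ ns) : renFun ns ms n = n := by
  simp [renFun, lookup_zip_eq_none h]

lemma renFun_cons_self {a b : ℕ} {ns ms : List ℕ} : renFun (a :: ns) (b :: ms) a = b := by
  simp [renFun, List.zip_cons_cons]

lemma renFun_cons_ne {a b n : ℕ} {ns ms : List ℕ} (h : n ≠ a) :
    renFun (a :: ns) (b :: ms) n = renFun ns ms n := by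
  simp [renFun, List.zip_cons_cons, lookup_cons_ne h]

lemma renFun_mem {ns ms : List ℕ} (hlen : ns.length = ms.length) {n : ℕ} (h : n ∈ ns) :
    renFun ns ms n ∈ ms := by
  induction ns generalizing ms with
  | nil => cases h
  | cons a ns ih =>
    cases ms with
    | nil => simp at hlen
    | cons b ms =>
      by_cases hna : n = a
      · subst hna; rw [renFun_cons_self]; exact List.mem_cons_self
      · rw [renFun_cons_ne hna]
        rcases List.mem_cons.1 h with rfl | h
        · exact absurd rfl hna
        · exact List.mem_cons_of_mem _ (ih (by simpa using hlen) h)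

lemma renFun_inv_mem {ns ms : List ℕ} (hlen : ns.length = ms.length)
    (hns : ns.Nodup) (hms : ms.Nodup) (hdisj : ∀ m ∈ ms, m ∉ ns) :
    ∀ n ∈ ns, renFun ms ns (renFun ns ms n) = n := by
  induction ns generalizing ms with
  | nil => intro n h; cases h
  | cons a ns ih =>
    cases ms with
    | nil => simp at hlen
    | cons b ms =>
      intro n hn
      rcases List.mem_cons.1 hn with rfl | hn
      · rw [renFun_cons_self, renFun_cons_self]
      · have hna : n ≠ a := fun h => (List.nodup_cons.1 hns).1 (h ▸ hn)
        rw [renFun_cons_ne hna]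
        have hx : renFun ns ms n ∈ ms := renFun_mem (by simpa using hlen) hn
        have hbx : renFun ns ms n ≠ b := fun h => (List.nodup_cons.1 hms).1 (h ▸ hx)
        rw [renFun_cons_ne hbx]
        exact ih (by simpa using hlen) (List.nodup_cons.1 hns).2 (List.nodup_cons.1 hms).2
          (fun m hm hmn => hdisj m (List.mem_cons_of_mem _ hm) (List.mem_cons_of_mem _ hmn))
          n hn

lemma renFun_leftInv {ns ms : List ℕ} (hlen : ns.length = ms.length)
    (hns : ns.Nodup) (hms : ms.Nodup) (hdisj : ∀ m ∈ ms, m ∉ ns)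
    {n : ℕ} (hn : n ∉ ms) : renFun ms ns (renFun ns ms n) = n := by
  by_cases h : n ∈ ns
  · exact renFun_inv_mem hlen hns hms hdisj n h
  · rw [renFun_not_mem h, renFun_not_mem hn]

lemma renFun_injOn {ns ms : List ℕ} (hlen : ns.length = ms.length)
    (hns : ns.Nodup) (hms : ms.Nodup) (hdisj : ∀ m ∈ ms, m ∉ ns)
    {A : Finset ℕ} (hA : ∀ a ∈ A, a ∉ ms) :
    ∀ x ∈ A, ∀ y ∈ A, renFun ns ms x = renFun ns ms y → x = y := by
  intro x hx y hy h
  have h1 := renFun_leftInv hlen hns hms hdisj (hA x hx)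
  have h2 := renFun_leftInv hlen hns hms hdisj (hA y hy)
  rw [← h1, ← h2, h]

lemma exists_fresh (bad : Finset ℕ) (L : ℕ) :
    ∃ ks : List ℕ, ks.length = L ∧ ks.Nodup ∧ ∀ k ∈ ks, k ∉ bad := by
  refine ⟨(List.range L).map (· + (bad.sup id + 1)), by simp, ?_, ?_⟩
  · exact (List.nodup_range).map (fun a b h => by omega)
  · intro k hk hmem
    obtain ⟨i, hi, rfl⟩ := List.mem_map.1 hk
    have h2 : id (i + (bad.sup id + 1)) ≤ bad.sup id := Finset.le_sup (f := id) hmem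
    simp only [id] at h2
    omega
/-! ### Image facts for renFun -/

lemma renFun_image {as bs : List ℕ} (hl : as.length = bs.length)
    (hd : ∀ b ∈ bs, b ∉ as) (Z : Finset ℕ) :
    ∀ x ∈ Z.image (renFun as bs), x ∉ as ∧ (x ∈ bs ∨ x ∈ Z) := by
  intro x hx
  obtain ⟨y, hy, rfl⟩ := Finset.mem_image.1 hx
  by_cases h : y ∈ as
  · have hb := renFun_mem hl h
    exact ⟨hd _ hb, Or.inl hb⟩
  · rw [renFun_not_mem h]
    exact ⟨h, Or.inr hy⟩

/-! ### Main lemma: fresh renaming preserves observational equivalence -/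

lemma obsEq_rename (P : Program) (M N : Tm) (ns ms : List ℕ)
    (hlen : ns.length = ms.length) (hns : ns.Nodup) (hms : ms.Nodup)
    (hfresh : ∀ m ∈ ms, m ∉ M.names ∧ m ∉ N.names ∧ m ∉ P.names ∧ m ∉ ns)
    (h : ObsEq P M N) :
    ObsEq (P.rename (renFun ns ms)) (M.rename (renFun ns ms)) (N.rename (renFun ns ms)) := by
  set σ := renFun ns ms with hσdef
  have hdisj : ∀ m ∈ ms, m ∉ ns := fun m hm => (hfresh m hm).2.2.2
  have hdisj' : ∀ n ∈ ns, n ∉ ms := fun n hn hm => hdisj n hm hn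
  intro P' hP' hsub X
  obtain ⟨ks, hksl, hksn, hksf⟩ := exists_fresh
    (P'.names ∪ X.names ∪ M.names ∪ N.names ∪ P.names ∪ (ns.toFinset ∪ ms.toFinset))
    ns.length
  have hks : ∀ k ∈ ks, k ∉ P'.names ∧ k ∉ X.names ∧ k ∉ M.names ∧ k ∉ N.names ∧
      k ∉ P.names ∧ k ∉ ns ∧ k ∉ ms := by
    intro k hk
    have := hksf k hk
    simp only [Finset.mem_union, List.mem_toFinset, not_or] at this
    tauto
  have hksns : ∀ k ∈ ks, k ∉ ns := fun k hk => (hks k hk).2.2.2.2.2.1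
  set ρ := renFun ns ks with hρdef
  set τ := renFun ms ns with hτdef
  set P'' := (P'.rename ρ).rename τ with hP''def
  set X' := (X.rename ρ).rename τ with hX'def
  have hinjρP : ∀ x ∈ P'.names, ∀ y ∈ P'.names, ρ x = ρ y → x = y :=
    renFun_injOn hksl.symm hns hksn hksns (fun a ha hak => (hks a hak).1 ha)
  have hP'ρns : ∀ x ∈ (P'.rename ρ).names, x ∉ ns := by
    intro x hx
    exact (renFun_image hksl.symm hksns P'.names x
      (Program.names_rename_subset ρ P' hx)).1
  have hinjτP : ∀ x ∈ (P'.rename ρ).names, ∀ y ∈ (P'.rename ρ).names, τ x = τ y → x = y :=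
    renFun_injOn hlen.symm hms hns hdisj' hP'ρns
  have hP''wf : P''.Wf := wf_rename hinjτP (wf_rename hinjρP hP')
  have hPσns : ∀ x ∈ (P.rename σ).names, x ∉ ns := by
    intro x hx
    exact (renFun_image hlen hdisj P.names x (Program.names_rename_subset σ P hx)).1
  have hPσρ : (P.rename σ).rename ρ = P.rename σ :=
    Program.rename_id (fun x hx => renFun_not_mem (hPσns x hx))
  have hPστ : (P.rename σ).rename τ = P := by
    rw [Program.rename_rename]
    refine Program.rename_id (fun x hx => ?_)
    exact renFun_leftInv hlen hns hms hdisj (fun hxm => (hfresh x hxm).2.2.1 hx)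
  have hsub'' : P ⊆ P'' := by
    have h1 : (P.rename σ).rename ρ ⊆ P'.rename ρ := Program.rename_mono ρ hsub
    rw [hPσρ] at h1
    have h2 : ((P.rename σ).rename τ) ⊆ P'' := Program.rename_mono τ h1
    rwa [hPστ] at h2
  have key : ∀ W : Tm, W.names ⊆ M.names ∪ N.names →
      (Terminates P' (X.dot (W.rename σ)) ↔ Terminates P'' (X'.dot W)) := by
    intro W hW
    have hWms : ∀ x ∈ W.names, x ∉ ms := by
      intro x hx hxm
      rcases Finset.mem_union.1 (hW hx) with h' | h'
      · exact (hfresh x hxm).1 h'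
      · exact (hfresh x hxm).2.1 h'
    have hWσ : ∀ x ∈ (W.rename σ).names, x ∉ ns ∧ (x ∈ ms ∨ x ∈ W.names) := by
      intro x hx
      rw [Tm.names_rename] at hx
      exact renFun_image hlen hdisj W.names x hx
    have hWσks : ∀ x ∈ (W.rename σ).names, x ∉ ks := by
      intro x hx hxk
      rcases (hWσ x hx).2 with h' | h'
      · exact (hks x hxk).2.2.2.2.2.2 h'
      · rcases Finset.mem_union.1 (hW h') with h'' | h''
        · exact (hks x hxk).2.2.1 h''
        · exact (hks x hxk).2.2.2.1 h''
    set A₁ := P'.names ∪ X.names ∪ (W.rename σ).names with hA₁def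
    have hA₁ks : ∀ a ∈ A₁, a ∉ ks := by
      intro a ha hak
      rcases Finset.mem_union.1 ha with ha | ha
      · rcases Finset.mem_union.1 ha with ha | ha
        · exact (hks a hak).1 ha
        · exact (hks a hak).2.1 ha
      · exact hWσks a ha hak
    have hinjρ : ∀ x ∈ A₁, ∀ y ∈ A₁, ρ x = ρ y → x = y :=
      renFun_injOn hksl.symm hns hksn hksns hA₁ks
    have hWσρ : (W.rename σ).rename ρ = W.rename σ :=
      Tm.rename_id (fun x hx => renFun_not_mem (hWσ x hx).1)
    have e1 : Terminates P' (X.dot (W.rename σ)) ↔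
        Terminates (P'.rename ρ) ((X.rename ρ).dot (W.rename σ)) := by
      have hPA : P'.names ⊆ A₁ :=
        fun x hx => Finset.mem_union_left _ (Finset.mem_union_left _ hx)
      have hMA : (X.dot (W.rename σ)).names ⊆ A₁ := by
        intro x hx
        simp only [Tm.names] at hx
        rcases Finset.mem_union.1 hx with hx | hx
        · exact Finset.mem_union_left _ (Finset.mem_union_right _ hx)
        · exact Finset.mem_union_right _ hx
      have e := terminates_rename_iff (f := ρ) hinjρ hPA hMA
      have hrw : (X.dot (W.rename σ)).rename ρ = (X.rename ρ).dot (W.rename σ) := by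
        show (X.rename ρ).dot ((W.rename σ).rename ρ) = _
        rw [hWσρ]
      rwa [hrw] at e
    set A₂ := (P'.rename ρ).names ∪ (X.rename ρ).names ∪ (W.rename σ).names with hA₂def
    have hXρns : ∀ x ∈ (X.rename ρ).names, x ∉ ns := by
      intro x hx
      rw [Tm.names_rename] at hx
      exact (renFun_image hksl.symm hksns X.names x hx).1
    have hA₂ns : ∀ a ∈ A₂, a ∉ ns := by
      intro a ha
      rcases Finset.mem_union.1 ha with ha | ha
      · rcases Finset.mem_union.1 ha with ha | ha
        · exact hP'ρns a ha
        · exact hXρns a ha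
      · exact (hWσ a ha).1
    have hinjτ : ∀ x ∈ A₂, ∀ y ∈ A₂, τ x = τ y → x = y :=
      renFun_injOn hlen.symm hms hns hdisj' hA₂ns
    have hWστ : (W.rename σ).rename τ = W := by
      rw [Tm.rename_rename]
      refine Tm.rename_id (fun x hx => ?_)
      exact renFun_leftInv hlen hns hms hdisj (fun hxm => hWms x hx hxm)
    have e2 : Terminates (P'.rename ρ) ((X.rename ρ).dot (W.rename σ)) ↔
        Terminates P'' (X'.dot W) := by
      have hPA : (P'.rename ρ).names ⊆ A₂ :=
        fun x hx => Finset.mem_union_left _ (Finset.mem_union_left _ hx)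
      have hMA : ((X.rename ρ).dot (W.rename σ)).names ⊆ A₂ := by
        intro x hx
        simp only [Tm.names] at hx
        rcases Finset.mem_union.1 hx with hx | hx
        · exact Finset.mem_union_left _ (Finset.mem_union_right _ hx)
        · exact Finset.mem_union_right _ hx
      have e := terminates_rename_iff (f := τ) hinjτ hPA hMA
      have hrw : ((X.rename ρ).dot (W.rename σ)).rename τ = X'.dot W := by
        show ((X.rename ρ).rename τ).dot ((W.rename σ).rename τ) = _
        rw [hWστ]
      rwa [hrw] at e
    exact e1.trans e2
  have hM := key M Finset.subset_union_left
  have hN := key N Finset.subset_union_right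
  exact hM.trans ((h P'' hP''wf hsub'' X').trans hN.symm)
theorem fresh_renaming_preserves_obsEq (P : Program) (hP : P.Wf) (M N : Tm)
    (ns ms : List ℕ) (hlen : ns.length = ms.length)
    (hns : ns.Nodup) (hms : ms.Nodup)
    (hfresh : ∀ m ∈ ms,
      ¬ Tm.HasName m M ∧ ¬ Tm.HasName m N ∧ ¬ P.HasName m ∧ m ∉ ns) :
    ObsEq P M N ↔
      ObsEq (P.rename (renFun ns ms)) (M.rename (renFun ns ms)) (N.rename (renFun ns ms)) := by
  have hfreshN : ∀ m ∈ ms, m ∉ M.names ∧ m ∉ N.names ∧ m ∉ P.names ∧ m ∉ ns := by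
    intro m hm
    obtain ⟨h1, h2, h3, h4⟩ := hfresh m hm
    exact ⟨fun h => h1 (Tm.mem_names_iff.1 h), fun h => h2 (Tm.mem_names_iff.1 h),
      fun h => h3 (Program.mem_names_iff.1 h), h4⟩
  set σ := renFun ns ms with hσdef
  set τ := renFun ms ns with hτdef
  have hdisj : ∀ m ∈ ms, m ∉ ns := fun m hm => (hfreshN m hm).2.2.2
  have hdisj' : ∀ n ∈ ns, n ∉ ms := fun n hn hm => hdisj n hm hn
  constructor
  · exact obsEq_rename P M N ns ms hlen hns hms hfreshN
  · intro h
    have hMσ : ∀ x ∈ (M.rename σ).names, x ∉ ns := by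
      intro x hx
      rw [Tm.names_rename] at hx
      exact (renFun_image hlen hdisj M.names x hx).1
    have hNσ : ∀ x ∈ (N.rename σ).names, x ∉ ns := by
      intro x hx
      rw [Tm.names_rename] at hx
      exact (renFun_image hlen hdisj N.names x hx).1
    have hPσ : ∀ x ∈ (P.rename σ).names, x ∉ ns := by
      intro x hx
      exact (renFun_image hlen hdisj P.names x (Program.names_rename_subset σ P hx)).1
    have hfresh' : ∀ n ∈ ns, n ∉ (M.rename σ).names ∧ n ∉ (N.rename σ).names ∧
        n ∉ (P.rename σ).names ∧ n ∉ ms := by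
      intro n hn
      exact ⟨fun hmem => hMσ n hmem hn, fun hmem => hNσ n hmem hn,
        fun hmem => hPσ n hmem hn, hdisj' n hn⟩
    have h2 := obsEq_rename (P.rename σ) (M.rename σ) (N.rename σ) ms ns
      hlen.symm hms hns hfresh' h
    have hMστ : (M.rename σ).rename τ = M := by
      rw [Tm.rename_rename]
      refine Tm.rename_id (fun x hx => ?_)
      exact renFun_leftInv hlen hns hms hdisj (fun hxm => (hfreshN x hxm).1 hx)
    have hNστ : (N.rename σ).rename τ = N := by
      rw [Tm.rename_rename]
      refine Tm.rename_id (fun x hx => ?_)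
      exact renFun_leftInv hlen hns hms hdisj (fun hxm => (hfreshN x hxm).2.1 hx)
    have hPστ : (P.rename σ).rename τ = P := by
      rw [Program.rename_rename]
      refine Program.rename_id (fun x hx => ?_)
      exact renFun_leftInv hlen hns hms hdisj (fun hxm => (hfreshN x hxm).2.2.1 hx)
    rwa [hMστ, hNστ, hPστ] at h2
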